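/- Suppose L_AA1 := max over π ∈ [0,1] of |f₁(0,π) − f₀(0,π)| satisfies L_AA1 < 1. For the joint AA1 discrete-time dynamics a_{t+1} = F_A(a_t, b_t), b_{t+1} = F_B(a_t, b_t) (with the roles of the two coordinates swapped at any step where b_t > a_t), one has |F_A(π,π′) − F_B(π,π′)| ≤ L_AA1·|π − π′| for all π ≥ π′ in [0,1]; consequently |a_t − b_t| ≤ L_AA1^t·|a₀ − b₀| → 0 as t → ∞, i.e., society equalizes under AA1. -/
import Mathlib


open Filter Set Topology

/-- society equalizes under AA1.
The AA1 one-step maps are `F_A(π,π') = π·f₁(0,π') + (1−π)·f₀(0,π')` (advantaged group)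
and `F_B(π,π') = π'·f₁(0,π') + (1−π')·f₀(0,π')` (disadvantaged group), where `π ≥ π'`.
If `L_AA1 := max_{π ∈ [0,1]} |f₁(0,π) − f₀(0,π)| < 1`, then
`|F_A(π,π') − F_B(π,π')| ≤ L_AA1·|π − π'|` for all `π ≥ π'` in `[0,1]`, and for the joint
trajectories (with the roles of the coordinates swapped at any step where `b_t > a_t`)
`|a_t − b_t| ≤ L_AA1^t·|a₀ − b₀| → 0`. -/
theorem AA1_equalizes
    (f₀ f₁ : ℝ → ℝ → ℝ) (LAA1 : ℝ)
    (hmap0 : ∀ x ∈ Set.Icc (0:ℝ) 1, ∀ y ∈ Set.Icc (0:ℝ) 1, f₀ x y ∈ Set.Icc (0:ℝ) 1)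
    (hmap1 : ∀ x ∈ Set.Icc (0:ℝ) 1, ∀ y ∈ Set.Icc (0:ℝ) 1, f₁ x y ∈ Set.Icc (0:ℝ) 1)
    (hLAA1 : ∀ π ∈ Set.Icc (0:ℝ) 1, |f₁ 0 π - f₀ 0 π| ≤ LAA1)
    (hLAA1lt : LAA1 < 1)
    (FA FB : ℝ → ℝ → ℝ)
    (hFA : ∀ π π', FA π π' = π * f₁ 0 π' + (1 - π) * f₀ 0 π')
    (hFB : ∀ π π', FB π π' = π' * f₁ 0 π' + (1 - π') * f₀ 0 π')
    (a b : ℕ → ℝ)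
    (ha0 : a 0 ∈ Set.Icc (0:ℝ) 1) (hb0 : b 0 ∈ Set.Icc (0:ℝ) 1)
    (ha : ∀ t, a (t + 1) = if b t ≤ a t then FA (a t) (b t) else FB (b t) (a t))
    (hb : ∀ t, b (t + 1) = if b t ≤ a t then FB (a t) (b t) else FA (b t) (a t)) :
    (∀ π ∈ Set.Icc (0:ℝ) 1, ∀ π' ∈ Set.Icc (0:ℝ) 1, π' ≤ π →
        |FA π π' - FB π π'| ≤ LAA1 * |π - π'|) ∧
    (∀ t, |a t - b t| ≤ LAA1 ^ t * |a 0 - b 0|) ∧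
    Filter.Tendsto (fun t => |a t - b t|) Filter.atTop (nhds 0) := by

  have hL0 : 0 ≤ LAA1 := le_trans (abs_nonneg _) (hLAA1 0 (by norm_num))
  have key : ∀ π π', π' ∈ Set.Icc (0:ℝ) 1 → |FA π π' - FB π π'| ≤ LAA1 * |π - π'| := by
    intro π π' hπ'
    rw [hFA, hFB]
    have h : π * f₁ 0 π' + (1 - π) * f₀ 0 π' - (π' * f₁ 0 π' + (1 - π') * f₀ 0 π')
        = (π - π') * (f₁ 0 π' - f₀ 0 π') := by ring
    rw [h, abs_mul, mul_comm]
    exact mul_le_mul_of_nonneg_right (hLAA1 π' hπ') (abs_nonneg _)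
  have hcomb : ∀ x ∈ Set.Icc (0:ℝ) 1, ∀ u ∈ Set.Icc (0:ℝ) 1, ∀ v ∈ Set.Icc (0:ℝ) 1,
      x * u + (1 - x) * v ∈ Set.Icc (0:ℝ) 1 := by
    intro x hx u hu v hv
    constructor
    · nlinarith [hx.1, hx.2, hu.1, hu.2, hv.1, hv.2]
    · nlinarith [hx.1, hx.2, hu.1, hu.2, hv.1, hv.2]
  have hmem : ∀ t, a t ∈ Set.Icc (0:ℝ) 1 ∧ b t ∈ Set.Icc (0:ℝ) 1 := by
    intro t
    induction t with
    | zero => exact ⟨ha0, hb0⟩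
    | succ t ih =>
      obtain ⟨hat, hbt⟩ := ih
      rw [ha, hb]
      by_cases hc : b t ≤ a t
      · simp only [hc, if_true]
        rw [hFA, hFB]
        exact ⟨hcomb _ hat _ (hmap1 0 (by norm_num) _ hbt) _ (hmap0 0 (by norm_num) _ hbt),
          hcomb _ hbt _ (hmap1 0 (by norm_num) _ hbt) _ (hmap0 0 (by norm_num) _ hbt)⟩
      · simp only [hc, if_false]
        rw [hFA, hFB]
        exact ⟨hcomb _ hat _ (hmap1 0 (by norm_num) _ hat) _ (hmap0 0 (by norm_num) _ hat),
          hcomb _ hbt _ (hmap1 0 (by norm_num) _ hat) _ (hmap0 0 (by norm_num) _ hat)⟩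
  have hbound : ∀ t, |a t - b t| ≤ LAA1 ^ t * |a 0 - b 0| := by
    intro t
    induction t with
    | zero => simp
    | succ t ih =>
      have step : |a (t + 1) - b (t + 1)| ≤ LAA1 * |a t - b t| := by
        rw [ha, hb]
        by_cases hc : b t ≤ a t
        · simp only [hc, if_true]
          exact key _ _ (hmem t).2
        · simp only [hc, if_false]
          have := key (b t) (a t) (hmem t).1
          calc |FB (b t) (a t) - FA (b t) (a t)| = |FA (b t) (a t) - FB (b t) (a t)| :=
                abs_sub_comm _ _
            _ ≤ LAA1 * |b t - a t| := this
            _ = LAA1 * |a t - b t| := by rw [abs_sub_comm]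
      calc |a (t + 1) - b (t + 1)| ≤ LAA1 * |a t - b t| := step
        _ ≤ LAA1 * (LAA1 ^ t * |a 0 - b 0|) := by
            exact mul_le_mul_of_nonneg_left ih hL0
        _ = LAA1 ^ (t + 1) * |a 0 - b 0| := by ring
  refine ⟨fun π _ π' hπ' _ => key π π' hπ', hbound, ?_⟩
  have hg : Filter.Tendsto (fun t => LAA1 ^ t * |a 0 - b 0|) Filter.atTop (nhds 0) := by
    have := (tendsto_pow_atTop_nhds_zero_of_lt_one hL0 hLAA1lt).mul_const (|a 0 - b 0|)
    simpa using this
  exact squeeze_zero (fun t => abs_nonneg _) hbound hg
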